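/- (Reduction) Let 𝒞 be a finite set of constructive formulas and let G = CK+𝒞 be either T-free or T-full. If G proves a sequent Σ, {¬q_j}_{j=1}^m ⇒ ⋁_{i=1}^n p_i, where Σ is a finite multiset of modal Horn formulas and the p_i and q_j are atoms, then there exists a finite multiset Σ' of implicational Horn formulas such that the sequent Σ' ⇒ ⋁_{i=1}^n p_i ∨ ⋁_{j=1}^m q_j is classically valid and G proves Σ ⇒ ⋀Σ'. -/

import Mathlib

set_option autoImplicit false

namespace UPT

/-- Modal formulas over atoms of type `α` (the language `ℒ = {∧,∨,→,⊤,⊥,□,◇}`). -/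
inductive Fml (α : Type) : Type where
  | atom : α → Fml α
  | top  : Fml α
  | bot  : Fml α
  | and  : Fml α → Fml α → Fml α
  | or   : Fml α → Fml α → Fml α
  | imp  : Fml α → Fml α → Fml α
  | box  : Fml α → Fml α
  | dia  : Fml α → Fml α
deriving DecidableEq

variable {α β : Type}

/-- Simultaneous substitution of formulas for atoms. -/
def Fml.subst (σ : β → Fml α) : Fml β → Fml α
  | .atom b  => σ b
  | .top     => .top
  | .bot     => .bot
  | .and A B => .and (A.subst σ) (B.subst σ)
  | .or A B  => .or (A.subst σ) (B.subst σ)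
  | .imp A B => .imp (A.subst σ) (B.subst σ)
  | .box A   => .box (A.subst σ)
  | .dia A   => .dia (A.subst σ)

/-- A sequent: a finite multiset antecedent together with a succedent
containing at most one formula. -/
abbrev Seq (α : Type) : Type := Multiset (Fml α) × Option (Fml α)

/-- A rule set relates a (finite) list of premise sequents to a conclusion sequent. -/
abbrev RuleSet (α : Type) : Type := List (Seq α) → Seq α → Prop

/-- The axioms and rules of the single-conclusion sequent calculus `LJ`, stated
schematically: they are closed under substituting arbitrary formulas for atoms
and arbitrary multisets (resp. succedents) for the context variables. -/
inductive LJRule : List (Seq α) → Seq α → Prop where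
  | id (Γ : Multiset (Fml α)) (A : Fml α) : LJRule [] (A ::ₘ Γ, some A)
  | botL (Γ : Multiset (Fml α)) (Δ : Option (Fml α)) : LJRule [] (.bot ::ₘ Γ, Δ)
  | topR (Γ : Multiset (Fml α)) : LJRule [] (Γ, some .top)
  | wL (A : Fml α) (Γ : Multiset (Fml α)) (Δ : Option (Fml α)) :
      LJRule [(Γ, Δ)] (A ::ₘ Γ, Δ)
  | wR (A : Fml α) (Γ : Multiset (Fml α)) : LJRule [(Γ, none)] (Γ, some A)
  | cL (A : Fml α) (Γ : Multiset (Fml α)) (Δ : Option (Fml α)) :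
      LJRule [(A ::ₘ A ::ₘ Γ, Δ)] (A ::ₘ Γ, Δ)
  | cut (A : Fml α) (Γ : Multiset (Fml α)) (Δ : Option (Fml α)) :
      LJRule [(Γ, some A), (A ::ₘ Γ, Δ)] (Γ, Δ)
  | andL₁ (A B : Fml α) (Γ : Multiset (Fml α)) (Δ : Option (Fml α)) :
      LJRule [(A ::ₘ Γ, Δ)] (.and A B ::ₘ Γ, Δ)
  | andL₂ (A B : Fml α) (Γ : Multiset (Fml α)) (Δ : Option (Fml α)) :
      LJRule [(B ::ₘ Γ, Δ)] (.and A B ::ₘ Γ, Δ)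
  | andR (A B : Fml α) (Γ : Multiset (Fml α)) :
      LJRule [(Γ, some A), (Γ, some B)] (Γ, some (.and A B))
  | orL (A B : Fml α) (Γ : Multiset (Fml α)) (Δ : Option (Fml α)) :
      LJRule [(A ::ₘ Γ, Δ), (B ::ₘ Γ, Δ)] (.or A B ::ₘ Γ, Δ)
  | orR₁ (A B : Fml α) (Γ : Multiset (Fml α)) : LJRule [(Γ, some A)] (Γ, some (.or A B))
  | orR₂ (A B : Fml α) (Γ : Multiset (Fml α)) : LJRule [(Γ, some B)] (Γ, some (.or A B))
  | impL (A B : Fml α) (Γ : Multiset (Fml α)) (Δ : Option (Fml α)) :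
      LJRule [(Γ, some A), (B ::ₘ Γ, Δ)] (.imp A B ::ₘ Γ, Δ)
  | impR (A B : Fml α) (Γ : Multiset (Fml α)) :
      LJRule [(A ::ₘ Γ, some B)] (Γ, some (.imp A B))

/-- The rule `K_□`: from `Γ ⇒ A` infer `□Γ ⇒ □A`. -/
inductive KBoxRule : List (Seq α) → Seq α → Prop where
  | mk (Γ : Multiset (Fml α)) (A : Fml α) :
      KBoxRule [(Γ, some A)] (Γ.map Fml.box, some (.box A))

/-- The rule `K_◇`: from `Γ, A ⇒ B` infer `□Γ, ◇A ⇒ ◇B`. -/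
inductive KDiaRule : List (Seq α) → Seq α → Prop where
  | mk (Γ : Multiset (Fml α)) (A B : Fml α) :
      KDiaRule [(A ::ₘ Γ, some B)] (.dia A ::ₘ Γ.map Fml.box, some (.dia B))

/-- The rule `◇L`: from `Γ, A ⇒ B` infer `Γ, ◇A ⇒ ◇B`. -/
inductive DiaLRule : List (Seq α) → Seq α → Prop where
  | mk (Γ : Multiset (Fml α)) (A B : Fml α) :
      DiaLRule [(A ::ₘ Γ, some B)] (.dia A ::ₘ Γ, some (.dia B))

/-- Adding a set `Ax` of axioms to a calculus: the initial sequents `⇒ σ(A)`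
for every substitution instance `σ(A)` of every `A ∈ Ax`. -/
def axRule (Ax : Fml α → Prop) : RuleSet α := fun ps c =>
  ps = [] ∧ ∃ (A : Fml α) (σ : α → Fml α), Ax A ∧ c = ((0 : Multiset (Fml α)), some (A.subst σ))

/-- Using a set of sequents as additional initial sequents (assumptions). -/
def hypRule (H : Set (Seq α)) : RuleSet α := fun ps c => ps = [] ∧ c ∈ H

/-- The sequent calculus `LJ+Ax`. -/
def LJSys (Ax : Fml α → Prop) : RuleSet α := fun ps c => LJRule ps c ∨ axRule Ax ps c

/-- The sequent calculus `CK+Ax = LJ + K_□ + K_◇ + Ax`. -/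
def CKSys (Ax : Fml α → Prop) : RuleSet α := fun ps c =>
  LJRule ps c ∨ KBoxRule ps c ∨ KDiaRule ps c ∨ axRule Ax ps c

/-- The sequent calculus `CK_□+Ax = LJ + K_□ + Ax`. -/
def CKBoxSys (Ax : Fml α → Prop) : RuleSet α := fun ps c =>
  LJRule ps c ∨ KBoxRule ps c ∨ axRule Ax ps c

/-- The sequent calculus `BLL+Ax = LJ + ◇L + Ax`. -/
def BLLSys (Ax : Fml α → Prop) : RuleSet α := fun ps c =>
  LJRule ps c ∨ DiaLRule ps c ∨ axRule Ax ps c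

/-- Provability of a sequent in the calculus generated by a rule set. -/
inductive Derives (R : RuleSet α) : Multiset (Fml α) → Option (Fml α) → Prop where
  | step {ps : List (Seq α)} {c : Seq α} (hr : R ps c)
      (hp : ∀ p ∈ ps, Derives R p.1 p.2) : Derives R c.1 c.2

/-- Basic formulas: generated from atoms, `⊤`, `⊥` by `∧`, `∨`, `◇`. -/
inductive Basic : Fml α → Prop where
  | atom (a : α) : Basic (.atom a)
  | top : Basic (.top : Fml α)
  | bot : Basic (.bot : Fml α)
  | and {A B : Fml α} : Basic A → Basic B → Basic (.and A B)
  | or {A B : Fml α} : Basic A → Basic B → Basic (.or A B)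
  | dia {A : Fml α} : Basic A → Basic (.dia A)

/-- Almost positive formulas: generated from basic formulas by `∧`, `∨`, `□`, `◇`
and implications `A → B` with `A` basic and `B` almost positive. -/
inductive AlmostPos : Fml α → Prop where
  | basic {A : Fml α} : Basic A → AlmostPos A
  | and {A B : Fml α} : AlmostPos A → AlmostPos B → AlmostPos (.and A B)
  | or {A B : Fml α} : AlmostPos A → AlmostPos B → AlmostPos (.or A B)
  | box {A : Fml α} : AlmostPos A → AlmostPos (.box A)
  | dia {A : Fml α} : AlmostPos A → AlmostPos (.dia A)
  | imp {A B : Fml α} : Basic A → AlmostPos B → AlmostPos (.imp A B)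

/-- Constructive formulas: generated from basic formulas by `∧`, `□` and
implications `A → B` with `A` almost positive and `B` constructive. -/
inductive Constructive : Fml α → Prop where
  | basic {A : Fml α} : Basic A → Constructive A
  | and {A B : Fml α} : Constructive A → Constructive B → Constructive (.and A B)
  | box {A : Fml α} : Constructive A → Constructive (.box A)
  | imp {A B : Fml α} : AlmostPos A → Constructive B → Constructive (.imp A B)

/-- Harrop formulas: atoms, `⊥`, `⊤`, closed under `∧`, `□`, and implications
`A → B` with `A` arbitrary and `B` Harrop. -/
inductive Harrop : Fml α → Prop where
  | atom (a : α) : Harrop (.atom a)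
  | top : Harrop (.top : Fml α)
  | bot : Harrop (.bot : Fml α)
  | and {A B : Fml α} : Harrop A → Harrop B → Harrop (.and A B)
  | box {A : Fml α} : Harrop A → Harrop (.box A)
  | imp (A : Fml α) {B : Fml α} : Harrop B → Harrop (.imp A B)

/-- Conjunction of a list of formulas (`⋀∅ = ⊤`). -/
def conj : List (Fml α) → Fml α
  | [] => .top
  | [A] => A
  | A :: B :: l => .and A (conj (B :: l))

/-- Disjunction of a list of formulas (`⋁∅ = ⊥`). -/
def disj : List (Fml α) → Fml α
  | [] => .bot
  | [A] => A
  | A :: B :: l => .or A (disj (B :: l))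

/-- Disjunction of a succedent (at most one formula; `⋁∅ = ⊥`). -/
def odisj : Option (Fml α) → Fml α
  | none => .bot
  | some A => A

/-- The multiset `{A_i → B_i}_{i ∈ I}` of implications of an indexed family. -/
def imps (AB : List (Fml α × Fml α)) : Multiset (Fml α) :=
  ↑(AB.map fun p => Fml.imp p.1 p.2)

/-- The conjunction `⋀_{i∈I} (A_i → B_i)` of an indexed family of implications. -/
def impConj (AB : List (Fml α × Fml α)) : Fml α :=
  conj (AB.map fun p => Fml.imp p.1 p.2)

/-- Truth in the one-node *irreflexive* frame `𝒦ᵢ` under a Boolean valuation: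
`□A` is always true and `◇A` is always false; the propositional connectives
are evaluated classically. -/
def evalI (v : α → Bool) : Fml α → Bool
  | .atom a  => v a
  | .top     => true
  | .bot     => false
  | .and A B => evalI v A && evalI v B
  | .or A B  => evalI v A || evalI v B
  | .imp A B => !evalI v A || evalI v B
  | .box _   => true
  | .dia _   => false

/-- Truth in the one-node *reflexive* frame `𝒦ᵣ` under a Boolean valuation:
`□A` and `◇A` take the value of `A`. -/
def evalR (v : α → Bool) : Fml α → Bool
  | .atom a  => v a
  | .top     => true
  | .bot     => false
  | .and A B => evalR v A && evalR v B
  | .or A B  => evalR v A || evalR v B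
  | .imp A B => !evalR v A || evalR v B
  | .box A   => evalR v A
  | .dia A   => evalR v A

/-- Validity of a sequent with respect to a one-node semantics: under every
valuation, if all formulas of the antecedent are true then so is the succedent. -/
def SeqValid (ev : (α → Bool) → Fml α → Bool) (Γ : Multiset (Fml α)) (Δ : Option (Fml α)) :
    Prop :=
  ∀ v : α → Bool, (∀ A ∈ Γ, ev v A = true) → ∃ B ∈ Δ, ev v B = true

/-- `CK+Ax` is T-free: every provable sequent is valid in the irreflexive node frame. -/
def TFree (Ax : Fml α → Prop) : Prop :=
  ∀ (Γ : Multiset (Fml α)) (Δ : Option (Fml α)), Derives (CKSys Ax) Γ Δ → SeqValid evalI Γ Δ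

/-- `CK+Ax` is T-full: every provable sequent is valid in the reflexive node
frame and the calculus proves `⇒ □p → p` and `⇒ p → ◇p`. -/
def TFull (Ax : Fml α → Prop) : Prop :=
  (∀ (Γ : Multiset (Fml α)) (Δ : Option (Fml α)), Derives (CKSys Ax) Γ Δ → SeqValid evalR Γ Δ) ∧
  (∀ a : α, Derives (CKSys Ax) 0 (some (.imp (.box (.atom a)) (.atom a)))) ∧
  (∀ a : α, Derives (CKSys Ax) 0 (some (.imp (.atom a) (.dia (.atom a)))))

/-- Classical validity of a (modality-free) sequent: `⋀Γ → ⋁Δ` is true under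
every Boolean valuation of the atoms. -/
def ClValid (Γ : Multiset (Fml α)) (Δ : Option (Fml α)) : Prop :=
  ∀ v : α → Bool, (∀ A ∈ Γ, evalI v A = true) → ∃ B ∈ Δ, evalI v B = true

/-- Nonempty conjunctions of atoms. -/
inductive AtomConj : Fml α → Prop where
  | single (a : α) : AtomConj (.atom a)
  | and {A B : Fml α} : AtomConj A → AtomConj B → AtomConj (.and A B)

/-- Implicational Horn formulas: `⊥`, atoms, and implications `⋀Q → r` with `Q`
a nonempty multiset of atoms and `r` an atom or `⊥`. -/
inductive ImpHorn : Fml α → Prop where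
  | bot : ImpHorn (.bot : Fml α)
  | atom (a : α) : ImpHorn (.atom a)
  | impAtom {A : Fml α} (hA : AtomConj A) (a : α) : ImpHorn (.imp A (.atom a))
  | impBot {A : Fml α} (hA : AtomConj A) : ImpHorn (.imp A .bot)

/-- Formulas of the form `◇^n p` with `p` an atom and `n ≥ 0`. -/
inductive DiaPowAtom : Fml α → Prop where
  | atom (a : α) : DiaPowAtom (.atom a)
  | dia {A : Fml α} : DiaPowAtom A → DiaPowAtom (.dia A)

/-- Nonempty conjunctions `⋀_{i=1}^k ◇^{n_i} p_i` of formulas `◇^{n_i} p_i`. -/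
inductive DiaConj : Fml α → Prop where
  | single {A : Fml α} : DiaPowAtom A → DiaConj A
  | and {A B : Fml α} : DiaConj A → DiaConj B → DiaConj (.and A B)

/-- Modal Horn formulas: `⊥` and atoms, closed under `□` and under implications
`A → B` with `A = ⋀_{i=1}^k ◇^{n_i} p_i` and `B` modal Horn. -/
inductive ModalHorn : Fml α → Prop where
  | bot : ModalHorn (.bot : Fml α)
  | atom (a : α) : ModalHorn (.atom a)
  | box {A : Fml α} : ModalHorn A → ModalHorn (.box A)
  | imp {A B : Fml α} : DiaConj A → ModalHorn B → ModalHorn (.imp A B)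

/-- The predicate "all atoms of the formula satisfy `P`". -/
def Fml.AtomsIn (P : α → Prop) : Fml α → Prop
  | .atom a  => P a
  | .top     => True
  | .bot     => True
  | .and A B => A.AtomsIn P ∧ B.AtomsIn P
  | .or A B  => A.AtomsIn P ∧ B.AtomsIn P
  | .imp A B => A.AtomsIn P ∧ B.AtomsIn P
  | .box A   => A.AtomsIn P
  | .dia A   => A.AtomsIn P

/-- No `◇` occurs in the formula. -/
def Fml.DiaFree : Fml α → Prop
  | .atom _  => True
  | .top     => True
  | .bot     => True
  | .and A B => A.DiaFree ∧ B.DiaFree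
  | .or A B  => A.DiaFree ∧ B.DiaFree
  | .imp A B => A.DiaFree ∧ B.DiaFree
  | .box A   => A.DiaFree
  | .dia _   => False

/-- No `□` occurs in the formula. -/
def Fml.BoxFree : Fml α → Prop
  | .atom _  => True
  | .top     => True
  | .bot     => True
  | .and A B => A.BoxFree ∧ B.BoxFree
  | .or A B  => A.BoxFree ∧ B.BoxFree
  | .imp A B => A.BoxFree ∧ B.BoxFree
  | .box _   => False
  | .dia A   => A.BoxFree

/-- The formula is modality-free (propositional). -/
def Fml.ModFree : Fml α → Prop
  | .atom _  => True
  | .top     => True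
  | .bot     => True
  | .and A B => A.ModFree ∧ B.ModFree
  | .or A B  => A.ModFree ∧ B.ModFree
  | .imp A B => A.ModFree ∧ B.ModFree
  | .box _   => False
  | .dia _   => False

/-- An angling of the language: an injection `φ ↦ ⟨φ⟩` from formulas into the
atoms whose image (the angled atoms) is disjoint from a fixed infinite set of
plain atoms. -/
structure Angling (α : Type) where
  angle : Fml α → α
  plain : Set α
  inj : Function.Injective angle
  plain_infinite : plain.Infinite
  disjoint : ∀ φ : Fml α, angle φ ∉ plain

/-- `a` is an angled atom. -/
def Angling.Angled (S : Angling α) (a : α) : Prop := ∃ φ : Fml α, S.angle φ = a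

/-- The translation `t`: `⊥^t = ⊥`, `p^t = ⟨p⟩`, `⊤^t = ⟨⊤⟩`,
`(A ∘ B)^t = (A^t ∘ B^t) ∧ ⟨A ∘ B⟩` and `(○A)^t = (○A^t) ∧ ⟨○A⟩`. -/
def Angling.tr (S : Angling α) : Fml α → Fml α
  | .atom a  => .atom (S.angle (.atom a))
  | .top     => .atom (S.angle .top)
  | .bot     => .bot
  | .and A B => .and (.and (S.tr A) (S.tr B)) (.atom (S.angle (.and A B)))
  | .or A B  => .and (.or (S.tr A) (S.tr B)) (.atom (S.angle (.or A B)))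
  | .imp A B => .and (.imp (S.tr A) (S.tr B)) (.atom (S.angle (.imp A B)))
  | .box A   => .and (.box (S.tr A)) (.atom (S.angle (.box A)))
  | .dia A   => .and (.dia (S.tr A)) (.atom (S.angle (.dia A)))

/-- Action of the standard substitution on atoms: an angled atom `⟨φ⟩` is sent
to `φ`; plain atoms are fixed. -/
noncomputable def Angling.stdAtom (S : Angling α) (a : α) : Fml α :=
  haveI := Classical.propDecidable (∃ φ : Fml α, S.angle φ = a)
  if h : ∃ φ : Fml α, S.angle φ = a then h.choose else .atom a

/-- The standard substitution `s`: replaces each angled atom `⟨φ⟩` by `φ`,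
fixes the plain atoms, and commutes with all connectives. -/
noncomputable def Angling.std (S : Angling α) : Fml α → Fml α :=
  Fml.subst S.stdAtom

/-- The Visser–Harrop property of a calculus. -/
def VisserHarrop (R : RuleSet α) : Prop :=
  ∀ (Γ : Multiset (Fml α)), (∀ A ∈ Γ, Harrop A) →
  ∀ (AB : List (Fml α × Fml α)) (C D : Fml α),
    Derives R (Γ + imps AB) (some (.or C D)) →
    Derives R (Γ + imps AB) (some C) ∨
    Derives R (Γ + imps AB) (some D) ∨
    ∃ p ∈ AB, Derives R (Γ + imps AB) (some p.1)

/-- The disjunction property of a calculus. -/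
def DisjProp (R : RuleSet α) : Prop :=
  ∀ C D : Fml α, Derives R 0 (some (.or C D)) →
    Derives R 0 (some C) ∨ Derives R 0 (some D)

/-- The formula interpretation `I(Γ ⇒ Δ) = ⋀Γ → ⋁Δ` belongs to `L` (stated for
every enumeration of the antecedent multiset as a list). -/
def interpIn (L : Set (Fml α)) (s : Seq α) : Prop :=
  ∀ l : List (Fml α), (↑l : Multiset (Fml α)) = s.1 → Fml.imp (conj l) (odisj s.2) ∈ L

/- Named modal axioms (with `p := atom 0`, `q := atom 1`). -/
def axTa : Fml ℕ := .imp (.box (.atom 0)) (.atom 0)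
def axTb : Fml ℕ := .imp (.atom 0) (.dia (.atom 0))
def axBa : Fml ℕ := .imp (.dia (.box (.atom 0))) (.atom 0)
def axBb : Fml ℕ := .imp (.atom 0) (.box (.dia (.atom 0)))
def ax4a : Fml ℕ := .imp (.box (.atom 0)) (.box (.box (.atom 0)))
def ax4b : Fml ℕ := .imp (.dia (.dia (.atom 0))) (.dia (.atom 0))
def ax5a : Fml ℕ := .imp (.dia (.box (.atom 0))) (.box (.atom 0))
def ax5b : Fml ℕ := .imp (.dia (.atom 0)) (.box (.dia (.atom 0)))
def axDiaBot : Fml ℕ := .imp (.dia .bot) .bot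
def axDiaOr : Fml ℕ :=
  .imp (.dia (.or (.atom 0) (.atom 1))) (.or (.dia (.atom 0)) (.dia (.atom 1)))
def axBoxImp : Fml ℕ :=
  .imp (.imp (.dia (.atom 0)) (.box (.atom 1))) (.box (.imp (.atom 0) (.atom 1)))

/-- The axioms of `X ⊆ {T, B, 4, 5}` in both their `a`- and `b`-versions. -/
def XAxioms (tT tB t4 t5 : Bool) : Set (Fml ℕ) :=
  (if tT then ({axTa, axTb} : Set (Fml ℕ)) else ∅) ∪
  (if tB then ({axBa, axBb} : Set (Fml ℕ)) else ∅) ∪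
  (if t4 then ({ax4a, ax4b} : Set (Fml ℕ)) else ∅) ∪
  (if t5 then ({ax5a, ax5b} : Set (Fml ℕ)) else ∅)

/-- The additional axioms of `IK` over `CK`. -/
def IKExtra : Set (Fml ℕ) := {axDiaBot, axDiaOr, axBoxImp}

/-- The right rule with premises `{Γ, φ̄_i ⇒ ψ̄_i}_{i∈I}` and conclusion
`Γ, θ̄ ⇒ η̄`, closed under all substitutions of formulas for atoms and
multisets for the context `Γ`. -/
def rightRuleInst (prems : List (List (Fml α) × Option (Fml α)))
    (θ : List (Fml α)) (η : Option (Fml α)) : RuleSet α := fun ps c =>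
  ∃ (σ : α → Fml α) (Γ : Multiset (Fml α)),
    ps = prems.map (fun pr =>
        ((Γ + ↑(pr.1.map (Fml.subst σ)) : Multiset (Fml α)), pr.2.map (Fml.subst σ))) ∧
    c = ((Γ + ↑(θ.map (Fml.subst σ)) : Multiset (Fml α)), η.map (Fml.subst σ))

/-- The left rule with premises `{Γ, φ̄_i ⇒ ψ̄_i}_{i∈I} ∪ {Γ, θ̄_j ⇒ Δ}_{j∈J}`
and conclusion `Γ, η̄ ⇒ Δ`, closed under all substitutions of formulas for
atoms and multisets for `Γ` and `Δ`. -/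
def leftRuleInst (prems : List (List (Fml α) × Option (Fml α)))
    (lefts : List (List (Fml α))) (η : List (Fml α)) : RuleSet α := fun ps c =>
  ∃ (σ : α → Fml α) (Γ : Multiset (Fml α)) (Δ : Option (Fml α)),
    ps = prems.map (fun pr =>
          ((Γ + ↑(pr.1.map (Fml.subst σ)) : Multiset (Fml α)), pr.2.map (Fml.subst σ)))
        ++ lefts.map (fun θj => ((Γ + ↑(θj.map (Fml.subst σ)) : Multiset (Fml α)), Δ)) ∧
    c = ((Γ + ↑(η.map (Fml.subst σ)) : Multiset (Fml α)), Δ)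

/-- The formula `Ax_R` of a right rule. -/
def AxRight (prems : List (List (Fml α) × Option (Fml α)))
    (θ : List (Fml α)) (η : Option (Fml α)) : Fml α :=
  .imp (.and (conj (prems.map fun pr => .imp (conj pr.1) (odisj pr.2))) (conj θ)) (odisj η)

/-- The formula `Ax_R` of a left rule. -/
def AxLeft (prems : List (List (Fml α) × Option (Fml α)))
    (lefts : List (List (Fml α))) (η : List (Fml α)) : Fml α :=
  .imp (.and (conj (prems.map fun pr => .imp (conj pr.1) (odisj pr.2))) (conj η))
    (disj (lefts.map conj))

/-- The forgetful translation `f_i`: fixes atoms, `⊤`, `⊥`, commutes with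
`∧`, `∨`, `→`, `□`, and sends every `◇A` to `⊥`. -/
def fi : Fml α → Fml α
  | .atom a  => .atom a
  | .top     => .top
  | .bot     => .bot
  | .and A B => .and (fi A) (fi B)
  | .or A B  => .or (fi A) (fi B)
  | .imp A B => .imp (fi A) (fi B)
  | .box A   => .box (fi A)
  | .dia _   => .bot

/-- The forgetful translation `f_r`: fixes atoms, `⊤`, `⊥`, commutes with
`∧`, `∨`, `→`, `□`, and sends `◇A` to `f_r A`. -/
def fr : Fml α → Fml α
  | .atom a  => .atom a
  | .top     => .top
  | .bot     => .bot
  | .and A B => .and (fr A) (fr B)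
  | .or A B  => .or (fr A) (fr B)
  | .imp A B => .imp (fr A) (fr B)
  | .box A   => .box (fr A)
  | .dia A   => fr A


section Reduction

theorem Fml.subst_subst (σ τ : ℕ → Fml ℕ) (A : Fml ℕ) :
    (A.subst σ).subst τ = A.subst (fun b => (σ b).subst τ) := by
  induction A <;> simp [Fml.subst, *]

theorem LJRule.substc {τ : ℕ → Fml ℕ} {ps : List (Seq ℕ)} {c : Seq ℕ} (h : LJRule ps c) :
    LJRule (ps.map fun s => (s.1.map (Fml.subst τ), s.2.map (Fml.subst τ)))
      (c.1.map (Fml.subst τ), c.2.map (Fml.subst τ)) := by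
  cases h <;>
    simp only [List.map, Multiset.map_cons, Option.map_some, Option.map_none, Fml.subst] <;>
    constructor

theorem CKSys.substc {Ax : Fml ℕ → Prop} {τ : ℕ → Fml ℕ} {ps : List (Seq ℕ)} {c : Seq ℕ}
    (h : CKSys Ax ps c) :
    CKSys Ax (ps.map fun s => (s.1.map (Fml.subst τ), s.2.map (Fml.subst τ)))
      (c.1.map (Fml.subst τ), c.2.map (Fml.subst τ)) := by
  rcases h with h | h | h | h
  · exact Or.inl h.substc
  · rcases h with ⟨Γ, A⟩
    refine Or.inr (Or.inl ?_)
    simpa [Multiset.map_map, Function.comp_def, Fml.subst] using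
      KBoxRule.mk (Γ.map (Fml.subst τ)) (A.subst τ)
  · rcases h with ⟨Γ, A, B⟩
    refine Or.inr (Or.inr (Or.inl ?_))
    simpa [Multiset.map_map, Function.comp_def, Fml.subst] using
      KDiaRule.mk (Γ.map (Fml.subst τ)) (A.subst τ) (B.subst τ)
  · rcases h with ⟨rfl, A, σ, hA, rfl⟩
    refine Or.inr (Or.inr (Or.inr ⟨rfl, A, fun b => (σ b).subst τ, hA, ?_⟩))
    simp [Fml.subst_subst]

theorem Derives.substCK {Ax : Fml ℕ → Prop} {Γ : Multiset (Fml ℕ)} {Δ : Option (Fml ℕ)}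
    (τ : ℕ → Fml ℕ) (h : Derives (CKSys Ax) Γ Δ) :
    Derives (CKSys Ax) (Γ.map (Fml.subst τ)) (Δ.map (Fml.subst τ)) := by
  induction h with
  | step hr hp ih =>
    exact Derives.step (c := (_, _)) (CKSys.substc hr)
      (by rintro p hp'
          rcases List.mem_map.1 hp' with ⟨q, hq, rfl⟩
          exact ih q hq)

end Reduction
section Reduction2

variable {Ax : Fml ℕ → Prop}

theorem derives_lj {ps : List (Seq ℕ)} {c : Seq ℕ} (h : LJRule ps c)
    (hp : ∀ p ∈ ps, Derives (CKSys Ax) p.1 p.2) : Derives (CKSys Ax) c.1 c.2 :=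
  Derives.step (Or.inl h) hp

theorem Derives.weaken {Γ : Multiset (Fml ℕ)} {Δ : Option (Fml ℕ)}
    (h : Derives (CKSys Ax) Γ Δ) (Γ' : Multiset (Fml ℕ)) :
    Derives (CKSys Ax) (Γ' + Γ) Δ := by
  induction Γ' using Multiset.induction_on with
  | empty => simpa using h
  | cons a s ih =>
    rw [Multiset.cons_add]
    exact derives_lj (c := (a ::ₘ (s + Γ), Δ)) (LJRule.wL a (s + Γ) Δ)
      (by rintro p hp; simp at hp; subst hp; exact ih)

theorem Derives.weaken1 {Γ : Multiset (Fml ℕ)} {Δ : Option (Fml ℕ)}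
    (h : Derives (CKSys Ax) Γ Δ) (A : Fml ℕ) :
    Derives (CKSys Ax) (A ::ₘ Γ) Δ := by
  simpa using h.weaken {A}

theorem derives_conjR {Γ : Multiset (Fml ℕ)} (L : List (Fml ℕ))
    (h : ∀ M ∈ L, Derives (CKSys Ax) Γ (some M)) :
    Derives (CKSys Ax) Γ (some (conj L)) := by
  induction L with
  | nil => exact derives_lj (c := (Γ, some .top)) (LJRule.topR Γ) (by simp)
  | cons A l ih =>
    cases l with
    | nil => exact h A (by simp)
    | cons B l' =>
      refine derives_lj (c := (Γ, some (.and A (conj (B :: l')))))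
        (LJRule.andR A (conj (B :: l')) Γ) ?_
      rintro p hp
      simp at hp
      rcases hp with rfl | rfl
      · exact h A (by simp)
      · exact ih (fun M hM => h M (List.mem_cons_of_mem _ hM))

theorem derives_id (Γ : Multiset (Fml ℕ)) (A : Fml ℕ) :
    Derives (CKSys Ax) (A ::ₘ Γ) (some A) :=
  derives_lj (c := (A ::ₘ Γ, some A)) (LJRule.id Γ A) (by simp)

theorem derives_mem_id {Γ : Multiset (Fml ℕ)} {A : Fml ℕ} (h : A ∈ Γ) :
    Derives (CKSys Ax) Γ (some A) := by
  rw [← Multiset.cons_erase h]; exact derives_id _ _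

/-- decompose a conjunction of formulas on the left into its conjuncts -/
theorem derives_conjL {Δ : Option (Fml ℕ)} (L : List (Fml ℕ)) :
    ∀ (Γ : Multiset (Fml ℕ)), Derives (CKSys Ax) ((↑L : Multiset (Fml ℕ)) + Γ) Δ →
      Derives (CKSys Ax) (conj L ::ₘ Γ) Δ := by
  induction L with
  | nil => intro Γ h; exact Derives.weaken1 (by simpa using h) _
  | cons A l ih =>
    intro Γ h
    cases l with
    | nil => simpa [conj] using h
    | cons B l' =>
      -- conj (A :: B :: l') = A ∧ conj (B :: l')
      set C := conj (B :: l') with hC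
      have h1 : Derives (CKSys Ax) (C ::ₘ A ::ₘ Γ) Δ := by
        apply ih
        have : (↑(B :: l') : Multiset (Fml ℕ)) + (A ::ₘ Γ) = ↑(A :: B :: l') + Γ := by
          simp only [← Multiset.cons_coe, Multiset.cons_add, Multiset.add_cons]
        rw [this]; exact h
      have h2 : Derives (CKSys Ax) (.and A C ::ₘ A ::ₘ Γ) Δ :=
        derives_lj (c := (.and A C ::ₘ A ::ₘ Γ, Δ)) (LJRule.andL₂ A C (A ::ₘ Γ) Δ)
          (by rintro p hp; simp at hp; subst hp; exact h1)
      have h3 : Derives (CKSys Ax) (A ::ₘ .and A C ::ₘ Γ) Δ := by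
        rw [Multiset.cons_swap]; exact h2
      have h4 : Derives (CKSys Ax) (.and A C ::ₘ .and A C ::ₘ Γ) Δ :=
        derives_lj (c := (.and A C ::ₘ .and A C ::ₘ Γ, Δ))
          (LJRule.andL₁ A C (.and A C ::ₘ Γ) Δ)
          (by rintro p hp; simp at hp; subst hp; exact h3)
      exact derives_lj (c := (.and A C ::ₘ Γ, Δ)) (LJRule.cL (.and A C) Γ Δ)
        (by rintro p hp; simp at hp; subst hp; exact h4)

theorem derives_cut {Γ : Multiset (Fml ℕ)} {Δ : Option (Fml ℕ)} (A : Fml ℕ)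
    (h1 : Derives (CKSys Ax) Γ (some A)) (h2 : Derives (CKSys Ax) (A ::ₘ Γ) Δ) :
    Derives (CKSys Ax) Γ Δ :=
  derives_lj (c := (Γ, Δ)) (LJRule.cut A Γ Δ)
    (by rintro p hp; simp at hp; rcases hp with rfl | rfl; exacts [h1, h2])

theorem derives_impR {Γ : Multiset (Fml ℕ)} (A B : Fml ℕ)
    (h : Derives (CKSys Ax) (A ::ₘ Γ) (some B)) :
    Derives (CKSys Ax) Γ (some (.imp A B)) :=
  derives_lj (c := (Γ, some (.imp A B))) (LJRule.impR A B Γ)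
    (by rintro p hp; simp at hp; subst hp; exact h)

theorem derives_impL {Γ : Multiset (Fml ℕ)} {Δ : Option (Fml ℕ)} (A B : Fml ℕ)
    (h1 : Derives (CKSys Ax) Γ (some A)) (h2 : Derives (CKSys Ax) (B ::ₘ Γ) Δ) :
    Derives (CKSys Ax) (.imp A B ::ₘ Γ) Δ :=
  derives_lj (c := (.imp A B ::ₘ Γ, Δ)) (LJRule.impL A B Γ Δ)
    (by rintro p hp; simp at hp; rcases hp with rfl | rfl; exacts [h1, h2])

end Reduction2
section Reduction3

def hasDia : Fml ℕ → Bool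
  | .and A B => hasDia A || hasDia B
  | .or A B => hasDia A || hasDia B
  | .imp A B => hasDia A || hasDia B
  | .box A => hasDia A
  | .dia _ => true
  | _ => false

def diaAtoms : Fml ℕ → List ℕ
  | .atom a => [a]
  | .dia A => diaAtoms A
  | .and A B => diaAtoms A ++ diaAtoms B
  | _ => []

def leaves (full : Bool) : Fml ℕ → List ℕ → List (List ℕ × Fml ℕ)
  | .bot, Q => [(Q, .bot)]
  | .atom a, Q => [(Q, .atom a)]
  | .box B, Q => if full then leaves full B Q else []
  | .imp D B, Q => if full || !hasDia D then leaves full B (Q ++ diaAtoms D) else []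
  | _, _ => []

def mkHorn (Q : List ℕ) (r : Fml ℕ) : Fml ℕ :=
  match Q with
  | [] => r
  | _ => .imp (conj (Q.map .atom)) r

def gg (full : Bool) (A : Fml ℕ) : List (Fml ℕ) :=
  (leaves full A []).map fun pr => mkHorn pr.1 pr.2

theorem leaves_mono (full : Bool) (A : Fml ℕ) :
    ∀ (Q Ql : List ℕ) (r : Fml ℕ), (Ql, r) ∈ leaves full A Q → ∀ x ∈ Q, x ∈ Ql := by
  induction A with
  | atom a => intro Q Ql r h x hx; simp [leaves] at h; rw [h.1]; exact hx
  | bot => intro Q Ql r h x hx; simp [leaves] at h; rw [h.1]; exact hx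
  | box B ihB =>
    intro Q Ql r h x hx
    rw [leaves] at h
    split at h
    · exact ihB Q Ql r h x hx
    · simp at h
  | imp D B _ ihB =>
    intro Q Ql r h x hx
    rw [leaves] at h
    split at h
    · exact ihB (Q ++ diaAtoms D) Ql r h x (List.mem_append_left _ hx)
    · simp at h
  | top => intro Q Ql r h x hx; simp [leaves] at h
  | and A B _ _ => intro Q Ql r h x hx; simp [leaves] at h
  | or A B _ _ => intro Q Ql r h x hx; simp [leaves] at h
  | dia A _ => intro Q Ql r h x hx; simp [leaves] at h

theorem leaves_rform (full : Bool) (A : Fml ℕ) :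
    ∀ (Q Ql : List ℕ) (r : Fml ℕ), (Ql, r) ∈ leaves full A Q →
      r = .bot ∨ ∃ a, r = .atom a := by
  induction A with
  | atom a => intro Q Ql r h; simp [leaves] at h; exact Or.inr ⟨a, h.2⟩
  | bot => intro Q Ql r h; simp [leaves] at h; exact Or.inl h.2
  | box B ihB =>
    intro Q Ql r h; rw [leaves] at h
    split at h
    · exact ihB Q Ql r h
    · simp at h
  | imp D B _ ihB =>
    intro Q Ql r h; rw [leaves] at h
    split at h
    · exact ihB _ Ql r h
    · simp at h
  | top => intro Q Ql r h; simp [leaves] at h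
  | and A B _ _ => intro Q Ql r h; simp [leaves] at h
  | or A B _ _ => intro Q Ql r h; simp [leaves] at h
  | dia A _ => intro Q Ql r h; simp [leaves] at h

theorem atomConj_atomConj (Q : List ℕ) (hQ : Q ≠ []) : AtomConj (conj (Q.map Fml.atom)) := by
  induction Q with
  | nil => simp at hQ
  | cons a l ih =>
    cases l with
    | nil => exact AtomConj.single a
    | cons b l' =>
      exact AtomConj.and (AtomConj.single a) (ih (by simp))

theorem mkHorn_impHorn (Q : List ℕ) (r : Fml ℕ) (hr : r = .bot ∨ ∃ a, r = .atom a) :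
    ImpHorn (mkHorn Q r) := by
  cases Q with
  | nil =>
    rcases hr with rfl | ⟨a, rfl⟩
    · exact ImpHorn.bot
    · exact ImpHorn.atom a
  | cons a l =>
    rcases hr with rfl | ⟨b, rfl⟩
    · exact ImpHorn.impBot (atomConj_atomConj (a :: l) (by simp))
    · exact ImpHorn.impAtom (atomConj_atomConj (a :: l) (by simp)) b

end Reduction3
section Reduction4

theorem bool_imp_iff (x y : Bool) : ((!x || y) = true ↔ (x = true → y = true)) := by
  cases x <;> cases y <;> simp

theorem evalI_conj (v : ℕ → Bool) (L : List (Fml ℕ)) :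
    evalI v (conj L) = true ↔ ∀ A ∈ L, evalI v A = true := by
  induction L with
  | nil => simp [conj, evalI]
  | cons A l ih =>
    cases l with
    | nil => simp [conj]
    | cons B l' =>
      show (evalI v A && evalI v (conj (B :: l'))) = true ↔ _
      rw [Bool.and_eq_true, ih]; simp

theorem evalR_conj (v : ℕ → Bool) (L : List (Fml ℕ)) :
    evalR v (conj L) = true ↔ ∀ A ∈ L, evalR v A = true := by
  induction L with
  | nil => simp [conj, evalR]
  | cons A l ih =>
    cases l with
    | nil => simp [conj]
    | cons B l' =>
      show (evalR v A && evalR v (conj (B :: l'))) = true ↔ _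
      rw [Bool.and_eq_true, ih]; simp

theorem evalI_disj (v : ℕ → Bool) (L : List (Fml ℕ)) :
    evalI v (disj L) = true ↔ ∃ A ∈ L, evalI v A = true := by
  induction L with
  | nil => simp [disj, evalI]
  | cons A l ih =>
    cases l with
    | nil => simp [disj]
    | cons B l' =>
      show (evalI v A || evalI v (disj (B :: l'))) = true ↔ _
      rw [Bool.or_eq_true, ih]; simp

theorem evalR_disj (v : ℕ → Bool) (L : List (Fml ℕ)) :
    evalR v (disj L) = true ↔ ∃ A ∈ L, evalR v A = true := by
  induction L with
  | nil => simp [disj, evalR]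
  | cons A l ih =>
    cases l with
    | nil => simp [disj]
    | cons B l' =>
      show (evalR v A || evalR v (disj (B :: l'))) = true ↔ _
      rw [Bool.or_eq_true, ih]; simp

theorem evalI_conj_atoms (v : ℕ → Bool) (Q : List ℕ) :
    evalI v (conj (Q.map Fml.atom)) = true ↔ ∀ a ∈ Q, v a = true := by
  rw [evalI_conj]; simp [evalI]

theorem evalR_conj_atoms (v : ℕ → Bool) (Q : List ℕ) :
    evalR v (conj (Q.map Fml.atom)) = true ↔ ∀ a ∈ Q, v a = true := by
  rw [evalR_conj]; simp [evalR]

theorem evalI_disj_atoms (v : ℕ → Bool) (Q : List ℕ) :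
    evalI v (disj (Q.map Fml.atom)) = true ↔ ∃ a ∈ Q, v a = true := by
  rw [evalI_disj]; simp [evalI]

theorem evalR_disj_atoms (v : ℕ → Bool) (Q : List ℕ) :
    evalR v (disj (Q.map Fml.atom)) = true ↔ ∃ a ∈ Q, v a = true := by
  rw [evalR_disj]; simp [evalR]

theorem evalI_mkHorn (v : ℕ → Bool) (Q : List ℕ) (r : Fml ℕ) :
    evalI v (mkHorn Q r) = true ↔ ((∀ a ∈ Q, v a = true) → evalI v r = true) := by
  cases Q with
  | nil => simp [mkHorn]
  | cons a l =>
    show (!evalI v (conj ((a :: l).map Fml.atom)) || evalI v r) = true ↔ _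
    rw [bool_imp_iff, evalI_conj_atoms]

theorem evalR_mkHorn (v : ℕ → Bool) (Q : List ℕ) (r : Fml ℕ) :
    evalR v (mkHorn Q r) = true ↔ ((∀ a ∈ Q, v a = true) → evalR v r = true) := by
  cases Q with
  | nil => simp [mkHorn]
  | cons a l =>
    show (!evalR v (conj ((a :: l).map Fml.atom)) || evalR v r) = true ↔ _
    rw [bool_imp_iff, evalR_conj_atoms]

theorem diaPow_evalR {D : Fml ℕ} (h : DiaPowAtom D) :
    ∀ (v : ℕ → Bool), ∀ a ∈ diaAtoms D, evalR v D = v a := by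
  induction h with
  | atom b => intro v a ha; simp [diaAtoms] at ha; subst ha; rfl
  | dia hD ih => intro v a ha; simp only [diaAtoms] at ha; exact ih v a ha

theorem diaConj_evalR {D : Fml ℕ} (h : DiaConj D) :
    ∀ (v : ℕ → Bool), evalR v D = true → ∀ a ∈ diaAtoms D, v a = true := by
  induction h with
  | single hP => intro v hD a ha; rw [← diaPow_evalR hP v a ha]; exact hD
  | and h1 h2 ih1 ih2 =>
    intro v hD a ha
    simp only [evalR, Bool.and_eq_true] at hD
    rcases List.mem_append.1 ha with ha | ha
    · exact ih1 v hD.1 a ha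
    · exact ih2 v hD.2 a ha

theorem diaConj_evalI_hasdia {D : Fml ℕ} (h : DiaConj D) :
    ∀ (v : ℕ → Bool), hasDia D = true → evalI v D = false := by
  induction h with
  | single hP =>
    intro v hd
    cases hP with
    | atom a => simp [hasDia] at hd
    | dia _ => rfl
  | and h1 h2 ih1 ih2 =>
    intro v hd
    simp only [hasDia, Bool.or_eq_true] at hd
    rcases hd with hd | hd
    · simp [evalI, ih1 v hd]
    · simp [evalI, ih2 v hd]

theorem diaConj_evalI_nodia {D : Fml ℕ} (h : DiaConj D) :
    ∀ (v : ℕ → Bool), hasDia D = false → evalI v D = true →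
      ∀ a ∈ diaAtoms D, v a = true := by
  induction h with
  | single hP =>
    intro v hd hD a ha
    cases hP with
    | atom b => simp [diaAtoms] at ha; subst ha; exact hD
    | dia _ => simp [hasDia] at hd
  | and h1 h2 ih1 ih2 =>
    intro v hd hD a ha
    simp only [hasDia, Bool.or_eq_false_iff] at hd
    simp only [evalI, Bool.and_eq_true] at hD
    rcases List.mem_append.1 ha with ha | ha
    · exact ih1 v hd.1 hD.1 a ha
    · exact ih2 v hd.2 hD.2 a ha

theorem semI {A : Fml ℕ} (h : ModalHorn A) :
    ∀ (v : ℕ → Bool) (Q : List ℕ),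
      (∀ pr ∈ leaves false A Q, (∀ a ∈ pr.1, v a = true) → evalI v pr.2 = true) →
      (∀ a ∈ Q, v a = true) → evalI v A = true := by
  induction h with
  | bot => intro v Q hl hQ; exact hl (Q, .bot) (by simp [leaves]) hQ
  | atom a => intro v Q hl hQ; exact hl (Q, .atom a) (by simp [leaves]) hQ
  | box hB ih => intro v Q hl hQ; rfl
  | imp hD hB ihB =>
    intro v Q hl hQ
    rename_i D B
    show (!evalI v D || evalI v B) = true
    rcases Bool.eq_false_or_eq_true (hasDia D) with hd | hd
    · simp [diaConj_evalI_hasdia hD v hd]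
    · rcases Bool.eq_false_or_eq_true (evalI v D) with hDv | hDv
      · have hB' : evalI v B = true := by
          apply ihB v (Q ++ diaAtoms D)
          · intro pr hpr hpr'
            apply hl pr _ hpr'
            simpa [leaves, hd] using hpr
          · intro a ha
            rcases List.mem_append.1 ha with ha | ha
            · exact hQ a ha
            · exact diaConj_evalI_nodia hD v hd hDv a ha
        simp [hB']
      · simp [hDv]

theorem semR {A : Fml ℕ} (h : ModalHorn A) :
    ∀ (v : ℕ → Bool) (Q : List ℕ),
      (∀ pr ∈ leaves true A Q, (∀ a ∈ pr.1, v a = true) → evalR v pr.2 = true) →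
      (∀ a ∈ Q, v a = true) → evalR v A = true := by
  induction h with
  | bot => intro v Q hl hQ; exact hl (Q, .bot) (by simp [leaves]) hQ
  | atom a => intro v Q hl hQ; exact hl (Q, .atom a) (by simp [leaves]) hQ
  | box hB ih =>
    intro v Q hl hQ
    exact ih v Q (fun pr hpr => hl pr (by simpa [leaves] using hpr)) hQ
  | imp hD hB ihB =>
    intro v Q hl hQ
    rename_i D B
    show (!evalR v D || evalR v B) = true
    rcases Bool.eq_false_or_eq_true (evalR v D) with hDv | hDv
    · have hB' : evalR v B = true := by
        apply ihB v (Q ++ diaAtoms D)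
        · intro pr hpr hpr'
          apply hl pr _ hpr'
          simpa [leaves] using hpr
        · intro a ha
          rcases List.mem_append.1 ha with ha | ha
          · exact hQ a ha
          · exact diaConj_evalR hD v hDv a ha
      simp [hB']
    · simp [hDv]

end Reduction4
section Reduction5

variable {Ax : Fml ℕ → Prop}

theorem tfull_boxT (h : TFull Ax) (A : Fml ℕ) :
    Derives (CKSys Ax) 0 (some (.imp (.box A) A)) := by
  have := Derives.substCK (fun _ => A) (h.2.1 0)
  simpa [Fml.subst] using this

theorem tfull_diaT (h : TFull Ax) (A : Fml ℕ) :
    Derives (CKSys Ax) 0 (some (.imp A (.dia A))) := by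
  have := Derives.substCK (fun _ => A) (h.2.2 0)
  simpa [Fml.subst] using this

/-- From `Γ ⇒ A` and provable `⇒ A → B` we get `Γ ⇒ B`. -/
theorem derives_mp {Γ : Multiset (Fml ℕ)} {A B : Fml ℕ}
    (hAB : Derives (CKSys Ax) 0 (some (.imp A B)))
    (hA : Derives (CKSys Ax) Γ (some A)) : Derives (CKSys Ax) Γ (some B) := by
  apply derives_cut (.imp A B) (by simpa using hAB.weaken Γ)
  exact derives_impL A B hA (derives_id Γ B)

/-- Derive a `DiaConj` formula from its atoms (in the T-full case, or when
it has no diamonds). -/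
theorem derives_diaConj {D : Fml ℕ} (hD : DiaConj D)
    (hok : hasDia D = false ∨ ∀ A : Fml ℕ, Derives (CKSys Ax) 0 (some (.imp A (.dia A)))) :
    ∀ (Γ : Multiset (Fml ℕ)), (∀ a ∈ diaAtoms D, Fml.atom a ∈ Γ) →
      Derives (CKSys Ax) Γ (some D) := by
  induction hD with
  | single hP =>
    induction hP with
    | atom b =>
      intro Γ hΓ
      exact derives_mem_id (hΓ b (by simp [diaAtoms]))
    | dia hP' ih =>
      rename_i A'
      intro Γ hΓ
      rcases hok with hok | hok
      · exact absurd hok (by cases hP' <;> simp [hasDia])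
      · have hA : Derives (CKSys Ax) Γ (some A') := by
          apply ih
          · exact Or.inr hok
          · intro a ha; exact hΓ a (by simpa [diaAtoms] using ha)
        exact derives_mp (hok A') hA
  | and h1 h2 ih1 ih2 =>
    intro Γ hΓ
    rename_i A' B'
    have hok1 : hasDia A' = false ∨ ∀ A : Fml ℕ, Derives (CKSys Ax) 0 (some (.imp A (.dia A))) := by
      rcases hok with hok | hok
      · exact Or.inl (by simp [hasDia, Bool.or_eq_false_iff] at hok; exact hok.1)
      · exact Or.inr hok
    have hok2 : hasDia B' = false ∨ ∀ A : Fml ℕ, Derives (CKSys Ax) 0 (some (.imp A (.dia A))) := by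
      rcases hok with hok | hok
      · exact Or.inl (by simp [hasDia, Bool.or_eq_false_iff] at hok; exact hok.2)
      · exact Or.inr hok
    refine derives_lj (c := (Γ, some (.and A' B'))) (LJRule.andR A' B' Γ) ?_
    rintro p hp
    simp at hp
    rcases hp with rfl | rfl
    · exact ih1 hok1 Γ (fun a ha => hΓ a (by simp [diaAtoms]; exact Or.inl ha))
    · exact ih2 hok2 Γ (fun a ha => hΓ a (by simp [diaAtoms]; exact Or.inr ha))

/-- Key provability lemma: each leaf of a modal Horn formula is derivable
from the formula together with the leaf's atoms. -/
theorem derives_key {A : Fml ℕ} (h : ModalHorn A) (full : Bool)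
    (hfull : full = true →
      (∀ B : Fml ℕ, Derives (CKSys Ax) 0 (some (.imp (.box B) B))) ∧
      (∀ B : Fml ℕ, Derives (CKSys Ax) 0 (some (.imp B (.dia B))))) :
    ∀ (Q Ql : List ℕ) (r : Fml ℕ), (Ql, r) ∈ leaves full A Q →
      Derives (CKSys Ax) (A ::ₘ ↑(Ql.map Fml.atom)) (some r) := by
  induction h with
  | bot =>
    intro Q Ql r hm
    simp [leaves] at hm
    exact derives_lj (c := (.bot ::ₘ ↑(Ql.map Fml.atom), some r))
      (LJRule.botL _ _) (by simp)
  | atom a =>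
    intro Q Ql r hm
    simp [leaves] at hm
    rw [hm.2]
    exact derives_id _ _
  | box hB ih =>
    rename_i B
    intro Q Ql r hm
    rw [leaves] at hm
    split at hm
    case isTrue hf =>
      have ihB := ih Q Ql r hm
      -- □B, atoms ⇒ r  via cut with □B → B
      have hax : Derives (CKSys Ax) (.box B ::ₘ ↑(Ql.map Fml.atom)) (some (.imp (.box B) B)) := by
        simpa using ((hfull hf).1 B).weaken (.box B ::ₘ ↑(Ql.map Fml.atom))
      apply derives_cut _ hax
      apply derives_impL (.box B) B (derives_id _ _)
      rw [Multiset.cons_swap]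
      exact ihB.weaken1 _
    case isFalse => simp at hm
  | imp hD hB ihB =>
    rename_i D B
    intro Q Ql r hm
    rw [leaves] at hm
    split at hm
    case isTrue hf =>
      have ihB' := ihB (Q ++ diaAtoms D) Ql r hm
      have hsub : ∀ a ∈ diaAtoms D, Fml.atom a ∈ (↑(Ql.map Fml.atom) : Multiset (Fml ℕ)) := by
        intro a ha
        have : a ∈ Ql := leaves_mono full B (Q ++ diaAtoms D) Ql r hm a
          (List.mem_append_right _ ha)
        exact Multiset.mem_coe.2 (List.mem_map.2 ⟨a, this, rfl⟩)
      have hok : hasDia D = false ∨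
          ∀ C : Fml ℕ, Derives (CKSys Ax) 0 (some (.imp C (.dia C))) := by
        rcases Bool.eq_false_or_eq_true full with hfu | hfu
        · exact Or.inr (hfull hfu).2
        · rw [hfu] at hf; simp at hf; exact Or.inl hf
      exact derives_impL D B (derives_diaConj hD hok _ hsub) ihB'
    case isFalse => simp at hm

theorem derives_perA {A : Fml ℕ} (h : ModalHorn A) (full : Bool)
    (hfull : full = true →
      (∀ B : Fml ℕ, Derives (CKSys Ax) 0 (some (.imp (.box B) B))) ∧
      (∀ B : Fml ℕ, Derives (CKSys Ax) 0 (some (.imp B (.dia B))))) :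
    ∀ M ∈ gg full A, Derives (CKSys Ax) (A ::ₘ 0) (some M) := by
  intro M hM
  rcases List.mem_map.1 hM with ⟨⟨Ql, r⟩, hpr, rfl⟩
  have key := derives_key h full hfull [] Ql r hpr
  cases Ql with
  | nil => simpa [mkHorn] using key
  | cons a l =>
    show Derives (CKSys Ax) (A ::ₘ 0) (some (.imp (conj ((a :: l).map Fml.atom)) r))
    apply derives_impR
    apply derives_conjL ((a :: l).map Fml.atom)
    have : (↑((a :: l).map Fml.atom) : Multiset (Fml ℕ)) + (A ::ₘ 0) =
        A ::ₘ ↑((a :: l).map Fml.atom) := by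
      rw [add_comm, Multiset.cons_add, zero_add]
    rw [this]
    exact key

end Reduction5
section Reduction6

theorem mkHorn_evalIR (v : ℕ → Bool) (Q : List ℕ) {r : Fml ℕ}
    (hr : r = .bot ∨ ∃ a, r = .atom a) :
    (evalI v (mkHorn Q r) = true ↔ evalR v (mkHorn Q r) = true) := by
  rw [evalI_mkHorn, evalR_mkHorn]
  rcases hr with rfl | ⟨a, rfl⟩ <;> exact Iff.rfl

theorem derives_fromMember {Ax : Fml ℕ → Prop} {Sig : Multiset (Fml ℕ)} {A M : Fml ℕ}
    (hA : A ∈ Sig) (h : Derives (CKSys Ax) (A ::ₘ 0) (some M)) :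
    Derives (CKSys Ax) Sig (some M) := by
  have := h.weaken (Sig.erase A)
  have heq : Sig.erase A + (A ::ₘ 0) = Sig := by
    rw [add_comm, Multiset.cons_add, zero_add, Multiset.cons_erase hA]
  rwa [heq] at this

theorem statement_10' (CS : Finset (Fml ℕ))
    (hTF : TFree (· ∈ CS) ∨ TFull (· ∈ CS))
    (Sig : Multiset (Fml ℕ)) (hSig : ∀ A ∈ Sig, ModalHorn A)
    (ps qs : List ℕ)
    (h : Derives (CKSys (· ∈ CS))
          (Sig + ↑(qs.map fun q => Fml.imp (.atom q) .bot))
          (some (disj (ps.map Fml.atom)))) :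
    ∃ Sig' : List (Fml ℕ),
      (∀ A ∈ Sig', ImpHorn A) ∧
      ClValid (↑Sig' : Multiset (Fml ℕ))
        (some (.or (disj (ps.map Fml.atom)) (disj (qs.map Fml.atom)))) ∧
      Derives (CKSys (· ∈ CS)) Sig (some (conj Sig')) := by
  classical
  set Ax : Fml ℕ → Prop := (· ∈ CS)
  -- choose the flag
  rcases hTF with hT | hT
  ·  -- T-free case, full = false
    refine ⟨Sig.toList.flatMap (gg false), ?_, ?_, ?_⟩
    · intro M hM
      rcases List.mem_flatMap.1 hM with ⟨A, hA, hM⟩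
      rcases List.mem_map.1 hM with ⟨⟨Ql, r⟩, hpr, rfl⟩
      exact mkHorn_impHorn Ql r (leaves_rform false A [] Ql r hpr)
    · intro v hv
      refine ⟨_, rfl, ?_⟩
      show (evalI v (disj (ps.map Fml.atom)) || evalI v (disj (qs.map Fml.atom))) = true
      by_cases hq : ∃ j ∈ qs, v j = true
      · rw [Bool.or_eq_true]; right; exact (evalI_disj_atoms v qs).2 hq
      · push_neg at hq
        have hSigT : ∀ A ∈ Sig, evalI v A = true := by
          intro A hA
          apply semI (hSig A hA) v []
          · intro pr hpr hpr'
            have hM : mkHorn pr.1 pr.2 ∈ Sig.toList.flatMap (gg false) :=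
              List.mem_flatMap.2 ⟨A, (Multiset.mem_toList).2 hA,
                List.mem_map.2 ⟨pr, hpr, rfl⟩⟩
            have := hv _ (Multiset.mem_coe.2 hM)
            exact (evalI_mkHorn v pr.1 pr.2).1 this hpr'
          · intro a ha; simp at ha
        have := hT _ _ h v ?_
        · rcases this with ⟨B, hB, hBv⟩
          cases hB
          rw [Bool.or_eq_true]; left; exact hBv
        · intro A hA
          rcases Multiset.mem_add.1 hA with hA | hA
          · exact hSigT A hA
          · rcases Multiset.mem_coe.1 hA with hA'
            rcases List.mem_map.1 hA' with ⟨q, hq', rfl⟩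
            show (!(v q) || false) = true
            simp [hq q hq']
    · apply derives_conjR
      intro M hM
      rcases List.mem_flatMap.1 hM with ⟨A, hA, hM⟩
      exact derives_fromMember ((Multiset.mem_toList).1 hA)
        (derives_perA (hSig A ((Multiset.mem_toList).1 hA)) false (by simp) M hM)
  ·  -- T-full case, full = true
    have hfull : (true : Bool) = true →
        (∀ B : Fml ℕ, Derives (CKSys Ax) 0 (some (.imp (.box B) B))) ∧
        (∀ B : Fml ℕ, Derives (CKSys Ax) 0 (some (.imp B (.dia B)))) :=
      fun _ => ⟨tfull_boxT hT, tfull_diaT hT⟩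
    refine ⟨Sig.toList.flatMap (gg true), ?_, ?_, ?_⟩
    · intro M hM
      rcases List.mem_flatMap.1 hM with ⟨A, hA, hM⟩
      rcases List.mem_map.1 hM with ⟨⟨Ql, r⟩, hpr, rfl⟩
      exact mkHorn_impHorn Ql r (leaves_rform true A [] Ql r hpr)
    · intro v hv
      refine ⟨_, rfl, ?_⟩
      show (evalI v (disj (ps.map Fml.atom)) || evalI v (disj (qs.map Fml.atom))) = true
      by_cases hq : ∃ j ∈ qs, v j = true
      · rw [Bool.or_eq_true]; right; exact (evalI_disj_atoms v qs).2 hq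
      · push_neg at hq
        have hSigT : ∀ A ∈ Sig, evalR v A = true := by
          intro A hA
          apply semR (hSig A hA) v []
          · intro pr hpr hpr'
            have hM : mkHorn pr.1 pr.2 ∈ Sig.toList.flatMap (gg true) :=
              List.mem_flatMap.2 ⟨A, (Multiset.mem_toList).2 hA,
                List.mem_map.2 ⟨pr, hpr, rfl⟩⟩
            have hI := hv _ (Multiset.mem_coe.2 hM)
            have hR := (mkHorn_evalIR v pr.1
              (leaves_rform true A [] pr.1 pr.2 (by exact hpr))).1 hI
            exact (evalR_mkHorn v pr.1 pr.2).1 hR hpr'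
          · intro a ha; simp at ha
        have := hT.1 _ _ h v ?_
        · rcases this with ⟨B, hB, hBv⟩
          cases hB
          rw [Bool.or_eq_true]; left
          exact (evalI_disj_atoms v ps).2 ((evalR_disj_atoms v ps).1 hBv)
        · intro A hA
          rcases Multiset.mem_add.1 hA with hA | hA
          · exact hSigT A hA
          · rcases Multiset.mem_coe.1 hA with hA'
            rcases List.mem_map.1 hA' with ⟨q, hq', rfl⟩
            show (!(v q) || false) = true
            simp [hq q hq']
    · apply derives_conjR
      intro M hM
      rcases List.mem_flatMap.1 hM with ⟨A, hA, hM⟩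
      exact derives_fromMember ((Multiset.mem_toList).1 hA)
        (derives_perA (hSig A ((Multiset.mem_toList).1 hA)) true hfull M hM)

end Reduction6

/-- reduction: if the T-free or T-full calculus `G = CK+𝒞`
proves `Σ, {¬q_j}_j ⇒ ⋁_i p_i` with `Σ` modal Horn, then there is a multiset
`Σ'` of implicational Horn formulas such that `Σ' ⇒ ⋁_i p_i ∨ ⋁_j q_j` is
classically valid and `G ⊢ Σ ⇒ ⋀Σ'`. -/
theorem statement_10 (CS : Finset (Fml ℕ)) (hCS : ∀ A ∈ CS, Constructive A)
    (hTF : TFree (· ∈ CS) ∨ TFull (· ∈ CS))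
    (Sig : Multiset (Fml ℕ)) (hSig : ∀ A ∈ Sig, ModalHorn A)
    (ps qs : List ℕ)
    (h : Derives (CKSys (· ∈ CS))
          (Sig + ↑(qs.map fun q => Fml.imp (.atom q) .bot))
          (some (disj (ps.map Fml.atom)))) :
    ∃ Sig' : List (Fml ℕ),
      (∀ A ∈ Sig', ImpHorn A) ∧
      ClValid (↑Sig' : Multiset (Fml ℕ))
        (some (.or (disj (ps.map Fml.atom)) (disj (qs.map Fml.atom)))) ∧
      Derives (CKSys (· ∈ CS)) Sig (some (conj Sig')) :=
  statement_10' CS hTF Sig hSig ps qs h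

end UPT
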